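/- The clairvoyant cost matrix over horizon T is dominated by the leading principal block submatrix of the clairvoyant cost matrix over horizon T+1: 𝐂_T ⪯ 𝐂_{T+1}^{[0:T, 0:T]}. (Lemma 2, right inequality.) -/

import Mathlib

open Matrix

noncomputable section

/-- Index type for stacked state / disturbance trajectories over horizon `T`:
block index in `Fin (T+1)`, coordinate in `Fin n`. -/
abbrev SIdx (n T : ℕ) := Fin (T + 1) × Fin n

/-- Index type for stacked input trajectories over horizon `T`. -/
abbrev UIdx (m T : ℕ) := Fin T × Fin m

/-- The block-downshift operator `𝐙`. -/
def Zshift (n T : ℕ) : Matrix (SIdx n T) (SIdx n T) ℝ :=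
  Matrix.of fun p q => if (p.1 : ℕ) = (q.1 : ℕ) + 1 ∧ p.2 = q.2 then (1 : ℝ) else 0

/-- `𝐀 = I_{T+1} ⊗ A`. -/
def bigA (n T : ℕ) (A : Matrix (Fin n) (Fin n) ℝ) : Matrix (SIdx n T) (SIdx n T) ℝ :=
  Matrix.of fun p q => if p.1 = q.1 then A p.2 q.2 else 0

/-- `𝐁 = col(I_T ⊗ B, 0)`. -/
def bigB (n m T : ℕ) (B : Matrix (Fin n) (Fin m) ℝ) : Matrix (SIdx n T) (UIdx m T) ℝ :=
  Matrix.of fun p q => if (p.1 : ℕ) = (q.1 : ℕ) then B p.2 q.2 else 0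

/-- `𝐐 = blkdiag(I_T ⊗ Q, 0)`. -/
def bigQ (n T : ℕ) (Q : Matrix (Fin n) (Fin n) ℝ) : Matrix (SIdx n T) (SIdx n T) ℝ :=
  Matrix.of fun p q => if p.1 = q.1 ∧ (p.1 : ℕ) < T then Q p.2 q.2 else 0

/-- `𝐑 = I_T ⊗ R`. -/
def bigR (m T : ℕ) (R : Matrix (Fin m) (Fin m) ℝ) : Matrix (UIdx m T) (UIdx m T) ℝ :=
  Matrix.of fun p q => if p.1 = q.1 then R p.2 q.2 else 0

/-- `𝐅 = (I − 𝐙𝐀)⁻¹𝐙𝐁`. -/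
def bigF (n m T : ℕ) (A : Matrix (Fin n) (Fin n) ℝ) (B : Matrix (Fin n) (Fin m) ℝ) :
    Matrix (SIdx n T) (UIdx m T) ℝ :=
  (1 - Zshift n T * bigA n T A)⁻¹ * (Zshift n T * bigB n m T B)

/-- `𝐆 = (I − 𝐙𝐀)⁻¹`. -/
def bigG (n T : ℕ) (A : Matrix (Fin n) (Fin n) ℝ) : Matrix (SIdx n T) (SIdx n T) ℝ :=
  (1 - Zshift n T * bigA n T A)⁻¹

/-- The control cost `J_T(u, δ) = xᵀ𝐐x + uᵀ𝐑u` with `x = 𝐅u + 𝐆δ`. -/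
def costJ (n m T : ℕ) (A : Matrix (Fin n) (Fin n) ℝ) (B : Matrix (Fin n) (Fin m) ℝ)
    (Q : Matrix (Fin n) (Fin n) ℝ) (R : Matrix (Fin m) (Fin m) ℝ)
    (u : UIdx m T → ℝ) (δ : SIdx n T → ℝ) : ℝ :=
  let x := bigF n m T A B *ᵥ u + bigG n T A *ᵥ δ
  x ⬝ᵥ (bigQ n T Q *ᵥ x) + u ⬝ᵥ (bigR m T R *ᵥ u)

/-- `𝐏 = 𝐑 + 𝐅ᵀ𝐐𝐅`. -/
def bigP (n m T : ℕ) (A : Matrix (Fin n) (Fin n) ℝ) (B : Matrix (Fin n) (Fin m) ℝ)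
    (Q : Matrix (Fin n) (Fin n) ℝ) (R : Matrix (Fin m) (Fin m) ℝ) :
    Matrix (UIdx m T) (UIdx m T) ℝ :=
  bigR m T R + (bigF n m T A B)ᵀ * bigQ n T Q * bigF n m T A B

/-- The clairvoyant cost matrix `𝐂_T = 𝐆ᵀ𝐐(I + 𝐅𝐑⁻¹𝐅ᵀ𝐐)⁻¹𝐆`. -/
def Cmat (n m T : ℕ) (A : Matrix (Fin n) (Fin n) ℝ) (B : Matrix (Fin n) (Fin m) ℝ)
    (Q : Matrix (Fin n) (Fin n) ℝ) (R : Matrix (Fin m) (Fin m) ℝ) :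
    Matrix (SIdx n T) (SIdx n T) ℝ :=
  (bigG n T A)ᵀ * bigQ n T Q *
    (1 + bigF n m T A B * (bigR m T R)⁻¹ * (bigF n m T A B)ᵀ * bigQ n T Q)⁻¹ * bigG n T A

/-- Assemble `δ = col(x₀, w₀, …, w_{T−1})`. -/
def assemble (n T : ℕ) (x0 : Fin n → ℝ) (w : Fin T × Fin n → ℝ) : SIdx n T → ℝ :=
  fun p => if h : (p.1 : ℕ) = 0 then x0 p.2
    else w (⟨(p.1 : ℕ) - 1, by have := p.1.isLt; omega⟩, p.2)

section Aux
variable (n m T : ℕ) (A : Matrix (Fin n) (Fin n) ℝ) (B : Matrix (Fin n) (Fin m) ℝ)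
  (Q : Matrix (Fin n) (Fin n) ℝ) (R : Matrix (Fin m) (Fin m) ℝ)

lemma ZA_apply (p q : SIdx n T) :
    (Zshift n T * bigA n T A) p q = if (p.1 : ℕ) = (q.1 : ℕ) + 1 then A p.2 q.2 else 0 := by
  classical
  rw [Matrix.mul_apply, Finset.sum_eq_single (q.1, p.2)]
  · by_cases h : (p.1 : ℕ) = (q.1 : ℕ) + 1 <;> simp [Zshift, bigA, h]
  · rintro ⟨r1, r2⟩ - hne
    by_cases h1 : r1 = q.1
    · subst h1
      have h2 : ¬ (p.2 = r2) := fun h => hne (by simp [h])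
      simp [Zshift, bigA, h2]
    · simp [Zshift, bigA, h1]
  · simp

lemma ZB_apply (p : SIdx n T) (q : UIdx m T) :
    (Zshift n T * bigB n m T B) p q = if (p.1 : ℕ) = (q.1 : ℕ) + 1 then B p.2 q.2 else 0 := by
  classical
  rw [Matrix.mul_apply, Finset.sum_eq_single ((q.1.castSucc : Fin (T+1)), p.2)]
  · by_cases h : (p.1 : ℕ) = (q.1 : ℕ) + 1 <;> simp [Zshift, bigB, h]
  · rintro ⟨r1, r2⟩ - hne
    by_cases h1 : (r1 : ℕ) = (q.1 : ℕ)
    · have h2 : ¬ (p.2 = r2) := by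
        intro h; apply hne
        ext
        · simpa using h1
        · simp [h]
      simp [Zshift, bigB, h2]
    · simp [Zshift, bigB, h1]
  · simp

lemma ZA_pow_shift : ∀ (k : ℕ) (p q : SIdx n T),
    ((Zshift n T * bigA n T A) ^ k) p q ≠ 0 → (p.1 : ℕ) = (q.1 : ℕ) + k := by
  intro k
  induction k with
  | zero =>
    intro p q h
    simp only [pow_zero] at h
    by_contra hne
    have hpq : p ≠ q := fun h' => hne (by rw [h']; simp)
    exact h (Matrix.one_apply_ne hpq)
  | succ k ih =>
    intro p q h
    rw [pow_succ', Matrix.mul_apply] at h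
    obtain ⟨r, -, hr⟩ := Finset.exists_ne_zero_of_sum_ne_zero h
    have h1 : (p.1 : ℕ) = (r.1 : ℕ) + 1 := by
      by_contra hc
      rw [ZA_apply] at hr
      simp [hc] at hr
    have h2 := ih r q (by intro hc; rw [hc, mul_zero] at hr; exact hr rfl)
    omega

lemma ZA_nilpotent : IsNilpotent (Zshift n T * bigA n T A) := by
  refine ⟨T + 2, ?_⟩
  ext p q
  by_contra h
  have := ZA_pow_shift n T A (T + 2) p q (by simpa using h)
  have := p.1.isLt
  omega

lemma isUnit_one_sub_ZA : IsUnit (1 - Zshift n T * bigA n T A) :=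
  (ZA_nilpotent n T A).isUnit_one_sub

lemma G_mul : bigG n T A * (1 - Zshift n T * bigA n T A) = 1 :=
  Matrix.nonsing_inv_mul _ ((Matrix.isUnit_iff_isUnit_det _).mp (isUnit_one_sub_ZA n T A))

lemma mul_G : (1 - Zshift n T * bigA n T A) * bigG n T A = 1 :=
  Matrix.mul_nonsing_inv _ ((Matrix.isUnit_iff_isUnit_det _).mp (isUnit_one_sub_ZA n T A))

end Aux

section Aux2
variable (n m T : ℕ) (A : Matrix (Fin n) (Fin n) ℝ) (B : Matrix (Fin n) (Fin m) ℝ)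

lemma mulVec_apply' {α β : Type*} [Fintype β] (M : Matrix α β ℝ) (v : β → ℝ) (p : α) :
    (M *ᵥ v) p = ∑ q, M p q * v q := rfl

lemma one_sub_mul_F :
    (1 - Zshift n T * bigA n T A) * bigF n m T A B = Zshift n T * bigB n m T B := by
  rw [bigF, ← Matrix.mul_assoc,
    Matrix.mul_nonsing_inv _ ((Matrix.isUnit_iff_isUnit_det _).mp (isUnit_one_sub_ZA n T A)),
    Matrix.one_mul]

lemma state_fix (u : UIdx m T → ℝ) (δ : SIdx n T → ℝ) :
    bigF n m T A B *ᵥ u + bigG n T A *ᵥ δ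
      = (Zshift n T * bigA n T A) *ᵥ (bigF n m T A B *ᵥ u + bigG n T A *ᵥ δ)
        + ((Zshift n T * bigB n m T B) *ᵥ u + δ) := by
  have h1 : (1 - Zshift n T * bigA n T A) *ᵥ (bigF n m T A B *ᵥ u + bigG n T A *ᵥ δ)
      = (Zshift n T * bigB n m T B) *ᵥ u + δ := by
    rw [Matrix.mulVec_add, Matrix.mulVec_mulVec, Matrix.mulVec_mulVec, one_sub_mul_F,
      mul_G, Matrix.one_mulVec]
  have h2 : (1 - Zshift n T * bigA n T A) *ᵥ (bigF n m T A B *ᵥ u + bigG n T A *ᵥ δ)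
      = (bigF n m T A B *ᵥ u + bigG n T A *ᵥ δ)
        - (Zshift n T * bigA n T A) *ᵥ (bigF n m T A B *ᵥ u + bigG n T A *ᵥ δ) := by
    rw [Matrix.sub_mulVec, Matrix.one_mulVec]
  rw [h2] at h1
  rw [← h1]; ring

lemma state_zero (u : UIdx m T → ℝ) (δ : SIdx n T → ℝ) (i : Fin n) :
    (bigF n m T A B *ᵥ u + bigG n T A *ᵥ δ) (⟨0, Nat.succ_pos T⟩, i)
      = δ (⟨0, Nat.succ_pos T⟩, i) := by
  have key := congrFun (state_fix n m T A B u δ) (⟨0, Nat.succ_pos T⟩, i)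
  have hz1 : ((Zshift n T * bigA n T A) *ᵥ (bigF n m T A B *ᵥ u + bigG n T A *ᵥ δ))
      (⟨0, Nat.succ_pos T⟩, i) = 0 := by
    rw [mulVec_apply']
    apply Finset.sum_eq_zero
    intro q _
    rw [ZA_apply]
    simp
  have hz2 : ((Zshift n T * bigB n m T B) *ᵥ u + δ) ((⟨0, Nat.succ_pos T⟩ : Fin (T+1)), i)
      = 0 + δ (⟨0, Nat.succ_pos T⟩, i) := by
    rw [Pi.add_apply]
    congr 1
    rw [mulVec_apply']
    apply Finset.sum_eq_zero
    intro q _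
    rw [ZB_apply]
    simp
  rw [key, Pi.add_apply, hz1, hz2]; ring

lemma state_succ (u : UIdx m T → ℝ) (δ : SIdx n T → ℝ) (t : ℕ) (ht : t + 1 < T + 1) (i : Fin n) :
    (bigF n m T A B *ᵥ u + bigG n T A *ᵥ δ) (⟨t+1, ht⟩, i)
      = (∑ j, A i j * (bigF n m T A B *ᵥ u + bigG n T A *ᵥ δ) (⟨t, by omega⟩, j))
        + (∑ j, B i j * u (⟨t, by omega⟩, j)) + δ (⟨t+1, ht⟩, i) := by
  have key := congrFun (state_fix n m T A B u δ) (⟨t+1, ht⟩, i)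
  have hz1 : ((Zshift n T * bigA n T A) *ᵥ (bigF n m T A B *ᵥ u + bigG n T A *ᵥ δ)) (⟨t+1, ht⟩, i)
      = ∑ j, A i j * (bigF n m T A B *ᵥ u + bigG n T A *ᵥ δ) (⟨t, by omega⟩, j) := by
    rw [mulVec_apply', Fintype.sum_prod_type]
    rw [Finset.sum_eq_single (⟨t, by omega⟩ : Fin (T+1))]
    · apply Finset.sum_congr rfl
      intro j _
      rw [ZA_apply]
      simp
    · intro r _ hr
      apply Finset.sum_eq_zero
      intro j _
      rw [ZA_apply]
      have hc : ¬ ((t + 1 : ℕ) = (r : ℕ) + 1) := by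
        intro h
        exact hr (Fin.ext (show (r : ℕ) = t by omega))
      simp [hc]
      intro h; exact absurd (by omega : t + 1 = (r : ℕ) + 1) hc
    · simp
  have hz2 : ((Zshift n T * bigB n m T B) *ᵥ u + δ) ((⟨t+1, ht⟩ : Fin (T+1)), i)
      = (∑ j, B i j * u (⟨t, by omega⟩, j)) + δ (⟨t+1, ht⟩, i) := by
    rw [Pi.add_apply]
    congr 1
    rw [mulVec_apply', Fintype.sum_prod_type]
    rw [Finset.sum_eq_single (⟨t, by omega⟩ : Fin T)]
    · apply Finset.sum_congr rfl
      intro j _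
      rw [ZB_apply]
      simp
    · intro r _ hr
      apply Finset.sum_eq_zero
      intro j _
      rw [ZB_apply]
      have hc : ¬ ((t + 1 : ℕ) = (r : ℕ) + 1) := by
        intro h
        exact hr (Fin.ext (show (r : ℕ) = t by omega))
      simp [hc]
      intro h; exact absurd (by omega : t + 1 = (r : ℕ) + 1) hc
    · simp
  rw [key, Pi.add_apply, hz1, hz2]; ring

end Aux2

section Aux3
variable (n m T : ℕ) (A : Matrix (Fin n) (Fin n) ℝ) (B : Matrix (Fin n) (Fin m) ℝ)
  (Q : Matrix (Fin n) (Fin n) ℝ) (R : Matrix (Fin m) (Fin m) ℝ)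

lemma quad_bigQ (x : SIdx n T → ℝ) :
    x ⬝ᵥ (bigQ n T Q *ᵥ x)
      = ∑ t : Fin (T+1), if (t : ℕ) < T
          then (fun i => x (t, i)) ⬝ᵥ (Q *ᵥ fun i => x (t, i)) else 0 := by
  rw [dotProduct, Fintype.sum_prod_type]
  refine Finset.sum_congr rfl fun t _ => ?_
  by_cases ht : (t : ℕ) < T
  · simp only [ht, if_true, dotProduct, mulVec_apply']
    refine Finset.sum_congr rfl fun i _ => ?_
    congr 1
    rw [Fintype.sum_prod_type]
    rw [Finset.sum_eq_single t]
    · refine Finset.sum_congr rfl fun j _ => ?_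
      simp [bigQ, ht]
    · intro r _ hr
      apply Finset.sum_eq_zero
      intro j _
      simp [bigQ, Ne.symm hr]
    · simp
  · simp only [ht, if_false]
    apply Finset.sum_eq_zero
    intro i _
    have hz : (bigQ n T Q *ᵥ x) (t, i) = 0 := by
      rw [mulVec_apply']
      apply Finset.sum_eq_zero
      intro q _
      simp [bigQ, ht]
    rw [hz, mul_zero]

lemma quad_bigR (x : UIdx m T → ℝ) :
    x ⬝ᵥ (bigR m T R *ᵥ x)
      = ∑ t : Fin T, (fun i => x (t, i)) ⬝ᵥ (R *ᵥ fun i => x (t, i)) := by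
  rw [dotProduct, Fintype.sum_prod_type]
  refine Finset.sum_congr rfl fun t _ => ?_
  simp only [dotProduct, mulVec_apply']
  refine Finset.sum_congr rfl fun i _ => ?_
  congr 1
  rw [Fintype.sum_prod_type]
  rw [Finset.sum_eq_single t]
  · refine Finset.sum_congr rfl fun j _ => ?_
    simp [bigR]
  · intro r _ hr
    apply Finset.sum_eq_zero
    intro j _
    simp [bigR, Ne.symm hr]
  · simp

lemma bigQ_psd (hQ : Q.PosSemidef) : (bigQ n T Q).PosSemidef := by
  have hQs : ∀ i j, Q j i = Q i j := fun i j => by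
    have := congrFun (congrFun hQ.1 i) j
    simpa using this
  rw [posSemidef_iff_dotProduct_mulVec]
  constructor
  · ext p q
    simp only [conjTranspose_apply, bigQ, Matrix.of_apply, star_trivial]
    obtain ⟨p1, p2⟩ := p
    obtain ⟨q1, q2⟩ := q
    by_cases h : p1 = q1
    · subst h
      simp [hQs]
    · rw [if_neg (fun hc => h hc.1.symm), if_neg (fun hc => h hc.1)]
  · intro x
    have hst : star x = x := funext fun p => star_trivial _
    rw [hst, quad_bigQ]
    apply Finset.sum_nonneg
    intro t _
    split
    · have := hQ.dotProduct_mulVec_nonneg fun i => x (t, i)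
      simpa using this
    · exact le_refl 0

lemma bigR_posdef (hR : R.PosDef) : (bigR m T R).PosDef := by
  have hRs : ∀ i j, R j i = R i j := fun i j => by
    have := congrFun (congrFun hR.1 i) j
    simpa using this
  rw [posDef_iff_dotProduct_mulVec]
  constructor
  · ext p q
    simp only [conjTranspose_apply, bigR, Matrix.of_apply, star_trivial]
    obtain ⟨p1, p2⟩ := p
    obtain ⟨q1, q2⟩ := q
    by_cases h : p1 = q1
    · subst h
      simp [hRs]
    · rw [if_neg (fun hc => h hc.symm), if_neg h]
  · intro x hx
    have hst : star x = x := funext fun p => star_trivial _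
    rw [hst, quad_bigR]
    have hex : ∃ p : UIdx m T, x p ≠ 0 := by
      by_contra hc
      push_neg at hc
      exact hx (funext hc)
    obtain ⟨⟨t0, i0⟩, hp⟩ := hex
    apply Finset.sum_pos'
    · intro t _
      have := hR.posSemidef.dotProduct_mulVec_nonneg fun i => x (t, i)
      simpa using this
    · refine ⟨t0, Finset.mem_univ _, ?_⟩
      have hne : (fun i => x (t0, i)) ≠ 0 := by
        intro hc
        exact hp (congrFun hc i0)
      have := hR.dotProduct_mulVec_pos hne
      simpa using this

end Aux3

section Aux4
variable (n m T : ℕ) (A : Matrix (Fin n) (Fin n) ℝ) (B : Matrix (Fin n) (Fin m) ℝ)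
  (Q : Matrix (Fin n) (Fin n) ℝ) (R : Matrix (Fin m) (Fin m) ℝ)

lemma bigP_posdef (hQ : Q.PosSemidef) (hR : R.PosDef) : (bigP n m T A B Q R).PosDef := by
  rw [bigP]
  apply (bigR_posdef m T R hR).add_posSemidef
  have := (bigQ_psd n T Q hQ).conjTranspose_mul_mul_same (bigF n m T A B)
  simpa using this

lemma bigP_isUnit_det (hQ : Q.PosSemidef) (hR : R.PosDef) : IsUnit (bigP n m T A B Q R).det :=
  (bigP_posdef n m T A B Q R hQ hR).det_pos.ne'.isUnit

lemma bigQ_symm (hQ : Q.PosSemidef) : (bigQ n T Q)ᵀ = bigQ n T Q := by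
  have := (bigQ_psd n T Q hQ).1
  simpa [Matrix.IsHermitian, conjTranspose_eq_transpose_of_trivial] using this

lemma inv_key (hQ : Q.PosSemidef) (hR : R.PosDef) :
    (1 + bigF n m T A B * (bigR m T R)⁻¹ * (bigF n m T A B)ᵀ * bigQ n T Q)⁻¹
      = 1 - bigF n m T A B * (bigP n m T A B Q R)⁻¹ * (bigF n m T A B)ᵀ * bigQ n T Q := by
  apply Matrix.inv_eq_right_inv
  have hR1 : (bigR m T R)⁻¹ * bigR m T R = 1 :=
    Matrix.nonsing_inv_mul _ (bigR_posdef m T R hR).det_pos.ne'.isUnit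
  have hP1 : bigP n m T A B Q R * (bigP n m T A B Q R)⁻¹ = 1 :=
    Matrix.mul_nonsing_inv _ (bigP_isUnit_det n m T A B Q R hQ hR)
  have hXF : (bigF n m T A B)ᵀ * bigQ n T Q * bigF n m T A B
      = bigP n m T A B Q R - bigR m T R := by
    rw [bigP]; abel
  simp only [Matrix.mul_assoc] at hXF hP1 hR1 ⊢
  set F := bigF n m T A B
  set Ft := (bigF n m T A B)ᵀ
  set Qb := bigQ n T Q
  set RI := (bigR m T R)⁻¹
  set Rb := bigR m T R
  set P := bigP n m T A B Q R
  set PI := (bigP n m T A B Q R)⁻¹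
  have hab : F * (RI * (Ft * Qb)) * (F * (PI * (Ft * Qb)))
      = F * (RI * (Ft * Qb)) - F * (PI * (Ft * Qb)) := by
    calc F * (RI * (Ft * Qb)) * (F * (PI * (Ft * Qb)))
        = F * (RI * ((Ft * (Qb * F)) * (PI * (Ft * Qb)))) := by
          simp only [Matrix.mul_assoc]
      _ = F * (RI * ((P - Rb) * (PI * (Ft * Qb)))) := by rw [hXF]
      _ = F * (RI * (P * (PI * (Ft * Qb)) - Rb * (PI * (Ft * Qb)))) := by
          rw [Matrix.sub_mul]
      _ = F * (RI * ((Ft * Qb) - Rb * (PI * (Ft * Qb)))) := by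
          rw [← Matrix.mul_assoc P, hP1, Matrix.one_mul]
      _ = F * (RI * (Ft * Qb) - (RI * Rb) * (PI * (Ft * Qb))) := by
          rw [Matrix.mul_sub, Matrix.mul_assoc]
      _ = F * (RI * (Ft * Qb) - PI * (Ft * Qb)) := by rw [hR1, Matrix.one_mul]
      _ = F * (RI * (Ft * Qb)) - F * (PI * (Ft * Qb)) := by rw [Matrix.mul_sub]
  have expand : (1 + F * (RI * (Ft * Qb))) * (1 - F * (PI * (Ft * Qb)))
      = 1 + F * (RI * (Ft * Qb)) - F * (PI * (Ft * Qb))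
        - F * (RI * (Ft * Qb)) * (F * (PI * (Ft * Qb))) := by
    generalize F * (RI * (Ft * Qb)) = a
    generalize F * (PI * (Ft * Qb)) = b
    noncomm_ring
  rw [expand, hab]
  abel

lemma Cmat_alt (hQ : Q.PosSemidef) (hR : R.PosDef) :
    Cmat n m T A B Q R
      = (bigG n T A)ᵀ * bigQ n T Q * bigG n T A
        - ((bigG n T A)ᵀ * bigQ n T Q * bigF n m T A B) * (bigP n m T A B Q R)⁻¹
            * ((bigF n m T A B)ᵀ * bigQ n T Q * bigG n T A) := by
  rw [Cmat, inv_key n m T A B Q R hQ hR]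
  simp only [Matrix.mul_sub, Matrix.sub_mul, Matrix.mul_one, Matrix.mul_assoc]

lemma mulVec_dot {α β : Type*} [Fintype α] [Fintype β] (M : Matrix α β ℝ) (v : β → ℝ)
    (w : α → ℝ) : (M *ᵥ v) ⬝ᵥ w = v ⬝ᵥ (Mᵀ *ᵥ w) := by
  simp only [dotProduct, mulVec_apply', transpose_apply, Finset.sum_mul, Finset.mul_sum]
  rw [Finset.sum_comm]
  refine Finset.sum_congr rfl fun i _ => Finset.sum_congr rfl fun j _ => by ring

lemma Cmat_herm (hQ : Q.PosSemidef) (hR : R.PosDef) : (Cmat n m T A B Q R).IsHermitian := by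
  rw [Cmat_alt n m T A B Q R hQ hR]
  apply Matrix.IsHermitian.sub
  · have := (bigQ_psd n T Q hQ).conjTranspose_mul_mul_same (bigG n T A)
    rw [conjTranspose_eq_transpose_of_trivial] at this
    exact this.1
  · have hPi : ((bigP n m T A B Q R)⁻¹).PosSemidef :=
      ((bigP_posdef n m T A B Q R hQ hR).inv).posSemidef
    have h := hPi.conjTranspose_mul_mul_same ((bigF n m T A B)ᵀ * bigQ n T Q * bigG n T A)
    have heq : ((bigF n m T A B)ᵀ * bigQ n T Q * bigG n T A)ᴴ
        = (bigG n T A)ᵀ * bigQ n T Q * bigF n m T A B := by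
      rw [conjTranspose_eq_transpose_of_trivial, Matrix.transpose_mul, Matrix.transpose_mul,
        Matrix.transpose_transpose, bigQ_symm n T Q hQ, Matrix.mul_assoc]
    rw [heq] at h
    exact h.1

end Aux4

section Aux5
variable (n m T : ℕ) (A : Matrix (Fin n) (Fin n) ℝ) (B : Matrix (Fin n) (Fin m) ℝ)
  (Q : Matrix (Fin n) (Fin n) ℝ) (R : Matrix (Fin m) (Fin m) ℝ)

lemma costJ_quad (hQ : Q.PosSemidef) (u : UIdx m T → ℝ) (δ : SIdx n T → ℝ) :
    costJ n m T A B Q R u δ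
      = u ⬝ᵥ (bigP n m T A B Q R *ᵥ u)
        + 2 * (u ⬝ᵥ (((bigF n m T A B)ᵀ * bigQ n T Q * bigG n T A) *ᵥ δ))
        + δ ⬝ᵥ (((bigG n T A)ᵀ * bigQ n T Q * bigG n T A) *ᵥ δ) := by
  have h1 : (bigF n m T A B *ᵥ u) ⬝ᵥ (bigQ n T Q *ᵥ (bigF n m T A B *ᵥ u))
      = u ⬝ᵥ (((bigF n m T A B)ᵀ * bigQ n T Q * bigF n m T A B) *ᵥ u) := by
    rw [mulVec_dot, Matrix.mulVec_mulVec, Matrix.mulVec_mulVec]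
  have h2 : (bigF n m T A B *ᵥ u) ⬝ᵥ (bigQ n T Q *ᵥ (bigG n T A *ᵥ δ))
      = u ⬝ᵥ (((bigF n m T A B)ᵀ * bigQ n T Q * bigG n T A) *ᵥ δ) := by
    rw [mulVec_dot, Matrix.mulVec_mulVec, Matrix.mulVec_mulVec]
  have hM : ((bigG n T A)ᵀ * bigQ n T Q * bigF n m T A B)ᵀ
      = (bigF n m T A B)ᵀ * bigQ n T Q * bigG n T A := by
    rw [Matrix.transpose_mul, Matrix.transpose_mul, Matrix.transpose_transpose,
      bigQ_symm n T Q hQ, Matrix.mul_assoc]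
  have h3 : (bigG n T A *ᵥ δ) ⬝ᵥ (bigQ n T Q *ᵥ (bigF n m T A B *ᵥ u))
      = u ⬝ᵥ (((bigF n m T A B)ᵀ * bigQ n T Q * bigG n T A) *ᵥ δ) := by
    rw [mulVec_dot, Matrix.mulVec_mulVec, Matrix.mulVec_mulVec, dotProduct_comm,
      mulVec_dot, hM]
  have h4 : (bigG n T A *ᵥ δ) ⬝ᵥ (bigQ n T Q *ᵥ (bigG n T A *ᵥ δ))
      = δ ⬝ᵥ (((bigG n T A)ᵀ * bigQ n T Q * bigG n T A) *ᵥ δ) := by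
    rw [mulVec_dot, Matrix.mulVec_mulVec, Matrix.mulVec_mulVec]
  simp only [costJ]
  rw [Matrix.mulVec_add, add_dotProduct, dotProduct_add, dotProduct_add, h1, h2, h3, h4,
    bigP, Matrix.add_mulVec, dotProduct_add]
  ring

lemma costJ_decomp (hQ : Q.PosSemidef) (hR : R.PosDef) (u : UIdx m T → ℝ) (δ : SIdx n T → ℝ) :
    costJ n m T A B Q R u δ
      = δ ⬝ᵥ (Cmat n m T A B Q R *ᵥ δ)
        + (u + (bigP n m T A B Q R)⁻¹ *ᵥ (((bigF n m T A B)ᵀ * bigQ n T Q * bigG n T A) *ᵥ δ))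
            ⬝ᵥ (bigP n m T A B Q R *ᵥ
              (u + (bigP n m T A B Q R)⁻¹ *ᵥ
                (((bigF n m T A B)ᵀ * bigQ n T Q * bigG n T A) *ᵥ δ))) := by
  have hdet := bigP_isUnit_det n m T A B Q R hQ hR
  have hM : ((bigG n T A)ᵀ * bigQ n T Q * bigF n m T A B)ᵀ
      = (bigF n m T A B)ᵀ * bigQ n T Q * bigG n T A := by
    rw [Matrix.transpose_mul, Matrix.transpose_mul, Matrix.transpose_transpose,
      bigQ_symm n T Q hQ, Matrix.mul_assoc]
  have hPt : (bigP n m T A B Q R)ᵀ = bigP n m T A B Q R := by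
    rw [← conjTranspose_eq_transpose_of_trivial]
    exact (bigP_posdef n m T A B Q R hQ hR).1
  have hPIt : ((bigP n m T A B Q R)⁻¹)ᵀ = (bigP n m T A B Q R)⁻¹ := by
    rw [Matrix.transpose_nonsing_inv, hPt]
  rw [costJ_quad n m T A B Q R hQ u δ, Cmat_alt n m T A B Q R hQ hR]
  set P := bigP n m T A B Q R with hPdef
  set PI := (bigP n m T A B Q R)⁻¹ with hPIdef
  set M1 := (bigG n T A)ᵀ * bigQ n T Q * bigF n m T A B with hM1
  set M2 := (bigF n m T A B)ᵀ * bigQ n T Q * bigG n T A with hM2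
  set c := M2 *ᵥ δ with hc
  set d := ((bigG n T A)ᵀ * bigQ n T Q * bigG n T A) *ᵥ δ with hd
  have hPP : P *ᵥ (PI *ᵥ c) = c := by
    rw [Matrix.mulVec_mulVec, Matrix.mul_nonsing_inv _ hdet, Matrix.one_mulVec]
  have h3 : (PI *ᵥ c) ⬝ᵥ (P *ᵥ u) = u ⬝ᵥ c := by
    rw [mulVec_dot, Matrix.mulVec_mulVec, hPIt, Matrix.nonsing_inv_mul _ hdet,
      Matrix.one_mulVec, dotProduct_comm]
  have h4 : δ ⬝ᵥ ((M1 * PI * M2) *ᵥ δ) = c ⬝ᵥ (PI *ᵥ c) := by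
    rw [← Matrix.mulVec_mulVec, ← Matrix.mulVec_mulVec]
    have step : δ ⬝ᵥ (M1 *ᵥ (PI *ᵥ c)) = (M1ᵀ *ᵥ δ) ⬝ᵥ (PI *ᵥ c) := by
      rw [mulVec_dot, Matrix.transpose_transpose]
    rw [step, hM]
  have h5 : (PI *ᵥ c) ⬝ᵥ c = c ⬝ᵥ (PI *ᵥ c) := dotProduct_comm _ _
  rw [Matrix.sub_mulVec, dotProduct_sub, h4, Matrix.mulVec_add, hPP, dotProduct_add,
    add_dotProduct, add_dotProduct, h3, h5]
  ring

lemma cost_ge (hQ : Q.PosSemidef) (hR : R.PosDef) (u : UIdx m T → ℝ) (δ : SIdx n T → ℝ) :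
    δ ⬝ᵥ (Cmat n m T A B Q R *ᵥ δ) ≤ costJ n m T A B Q R u δ := by
  rw [costJ_decomp n m T A B Q R hQ hR u δ]
  have h := (bigP_posdef n m T A B Q R hQ hR).posSemidef.dotProduct_mulVec_nonneg
    (u + (bigP n m T A B Q R)⁻¹ *ᵥ (((bigF n m T A B)ᵀ * bigQ n T Q * bigG n T A) *ᵥ δ))
  have hst : star (u + (bigP n m T A B Q R)⁻¹ *ᵥ
      (((bigF n m T A B)ᵀ * bigQ n T Q * bigG n T A) *ᵥ δ))
      = u + (bigP n m T A B Q R)⁻¹ *ᵥ (((bigF n m T A B)ᵀ * bigQ n T Q * bigG n T A) *ᵥ δ) :=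
    funext fun p => star_trivial _
  rw [hst] at h
  linarith

lemma cost_opt (hQ : Q.PosSemidef) (hR : R.PosDef) (δ : SIdx n T → ℝ) :
    costJ n m T A B Q R
      (-((bigP n m T A B Q R)⁻¹ *ᵥ (((bigF n m T A B)ᵀ * bigQ n T Q * bigG n T A) *ᵥ δ))) δ
      = δ ⬝ᵥ (Cmat n m T A B Q R *ᵥ δ) := by
  rw [costJ_decomp n m T A B Q R hQ hR _ δ, neg_add_cancel, zero_dotProduct, add_zero]

end Aux5

/-- Extend a horizon-`T` disturbance by zero to horizon `T+1`. -/
def extd (n T : ℕ) (δ : SIdx n T → ℝ) : SIdx n (T+1) → ℝ :=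
  fun p => if h : (p.1 : ℕ) < T + 1 then δ (⟨p.1, h⟩, p.2) else 0

section Aux6
variable (n m T : ℕ) (A : Matrix (Fin n) (Fin n) ℝ) (B : Matrix (Fin n) (Fin m) ℝ)
  (Q : Matrix (Fin n) (Fin n) ℝ) (R : Matrix (Fin m) (Fin m) ℝ)

lemma extd_castSucc (δ : SIdx n T → ℝ) (s : Fin (T+1)) (i : Fin n) :
    extd n T δ (s.castSucc, i) = δ (s, i) := by
  have hlt : ((s.castSucc : Fin (T+2)) : ℕ) < T + 1 := by simp; exact Nat.lt_succ_iff.mp s.isLt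
  rw [extd, dif_pos hlt]
  simp

lemma extd_last (δ : SIdx n T → ℝ) (i : Fin n) :
    extd n T δ (Fin.last (T+1), i) = 0 := by
  rw [extd, dif_neg]
  simp

lemma trunc_state (u' : UIdx m (T+1) → ℝ) (δ : SIdx n T → ℝ) :
    ∀ (t : ℕ) (ht : t < T + 1) (i : Fin n),
      (bigF n m T A B *ᵥ (fun q => u' (q.1.castSucc, q.2)) + bigG n T A *ᵥ δ) (⟨t, ht⟩, i)
        = (bigF n m (T+1) A B *ᵥ u' + bigG n (T+1) A *ᵥ extd n T δ) (⟨t, by omega⟩, i) := by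
  intro t
  induction t with
  | zero =>
    intro ht i
    rw [show (⟨0, ht⟩ : Fin (T+1)) = ⟨0, Nat.succ_pos T⟩ from rfl,
      state_zero n m T A B (fun q => u' (q.1.castSucc, q.2)) δ i]
    rw [show (⟨0, by omega⟩ : Fin (T+2)) = ⟨0, Nat.succ_pos (T+1)⟩ from rfl,
      state_zero n m (T+1) A B u' (extd n T δ) i]
    rw [extd, dif_pos (show ((⟨0, Nat.succ_pos (T+1)⟩ : Fin (T+2)) : ℕ) < T + 1 from
      Nat.succ_pos T)]
  | succ t ih =>
    intro ht i
    have hT' : t < T + 1 := by omega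
    rw [state_succ n m T A B (fun q => u' (q.1.castSucc, q.2)) δ t ht i,
      state_succ n m (T+1) A B u' (extd n T δ) t (by omega) i]
    have e1 : ∀ j, (bigF n m T A B *ᵥ (fun q => u' (q.1.castSucc, q.2)) + bigG n T A *ᵥ δ)
        (⟨t, hT'⟩, j)
        = (bigF n m (T+1) A B *ᵥ u' + bigG n (T+1) A *ᵥ extd n T δ) (⟨t, by omega⟩, j) :=
      fun j => ih hT' j
    have e2 : extd n T δ (⟨t+1, by omega⟩, i) = δ (⟨t+1, ht⟩, i) := by
      rw [extd, dif_pos (show ((⟨t+1, by omega⟩ : Fin (T+2)) : ℕ) < T + 1 from ht)]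
    have e3 : ∀ j, (fun q : UIdx m T => u' (q.1.castSucc, q.2)) (⟨t, by omega⟩, j)
        = u' (⟨t, by omega⟩, j) := fun j => rfl
    simp only [e1, e2, e3]

lemma submatrix_quad (C : Matrix (SIdx n (T+1)) (SIdx n (T+1)) ℝ) (δ : SIdx n T → ℝ) :
    δ ⬝ᵥ ((C.submatrix (fun p : SIdx n T => ((p.1.castSucc : Fin (T + 2)), p.2))
        (fun p : SIdx n T => ((p.1.castSucc : Fin (T + 2)), p.2))) *ᵥ δ)
      = extd n T δ ⬝ᵥ (C *ᵥ extd n T δ) := by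
  conv_rhs => rw [dotProduct, Fintype.sum_prod_type]
  rw [Fin.sum_univ_castSucc]
  simp only [extd_last, zero_mul, Finset.sum_const_zero, add_zero, extd_castSucc]
  conv_lhs => rw [dotProduct, Fintype.sum_prod_type]
  refine Finset.sum_congr rfl fun s _ => Finset.sum_congr rfl fun i _ => ?_
  congr 1
  rw [mulVec_apply', mulVec_apply', Fintype.sum_prod_type, Fintype.sum_prod_type,
    Fin.sum_univ_castSucc (n := T+1)]
  simp only [extd_last, mul_zero, Finset.sum_const_zero, add_zero, extd_castSucc,
    Matrix.submatrix_apply]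

lemma costJ_mono (hQ : Q.PosSemidef) (hR : R.PosDef) (u' : UIdx m (T+1) → ℝ)
    (δ : SIdx n T → ℝ) :
    costJ n m T A B Q R (fun q => u' (q.1.castSucc, q.2)) δ
      ≤ costJ n m (T+1) A B Q R u' (extd n T δ) := by
  have hx : ∀ (t : Fin (T+1)) (i : Fin n),
      (bigF n m T A B *ᵥ (fun q => u' (q.1.castSucc, q.2)) + bigG n T A *ᵥ δ) (t, i)
      = (bigF n m (T+1) A B *ᵥ u' + bigG n (T+1) A *ᵥ extd n T δ) (t.castSucc, i) :=
    fun t i => trunc_state n m T A B u' δ t.1 t.2 i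
  simp only [costJ]
  rw [quad_bigQ, quad_bigQ, quad_bigR, quad_bigR]
  apply add_le_add
  · rw [Fin.sum_univ_castSucc (n := T+1)]
    have hlast : (if ((Fin.last (T+1) : Fin (T+2)) : ℕ) < T + 1
        then (fun i => (bigF n m (T+1) A B *ᵥ u' + bigG n (T+1) A *ᵥ extd n T δ)
          (Fin.last (T+1), i)) ⬝ᵥ (Q *ᵥ fun i =>
            (bigF n m (T+1) A B *ᵥ u' + bigG n (T+1) A *ᵥ extd n T δ) (Fin.last (T+1), i))
        else 0) = 0 := by
      rw [if_neg]
      simp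
    rw [hlast, add_zero]
    apply Finset.sum_le_sum
    intro t _
    have htrue : ((t.castSucc : Fin (T+2)) : ℕ) < T + 1 := by simp; exact Nat.lt_succ_iff.mp t.isLt
    rw [if_pos htrue]
    have hfun : (fun i => (bigF n m T A B *ᵥ (fun q => u' (q.1.castSucc, q.2))
        + bigG n T A *ᵥ δ) (t, i))
        = fun i => (bigF n m (T+1) A B *ᵥ u' + bigG n (T+1) A *ᵥ extd n T δ)
          (t.castSucc, i) := funext (hx t)
    rw [hfun]
    split
    · exact le_refl _
    · have h := hQ.dotProduct_mulVec_nonneg fun i =>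
        (bigF n m (T+1) A B *ᵥ u' + bigG n (T+1) A *ᵥ extd n T δ) (t.castSucc, i)
      simpa using h
  · rw [Fin.sum_univ_castSucc (n := T)]
    have : ∀ t : Fin T,
        (fun i => (fun q : UIdx m T => u' (q.1.castSucc, q.2)) (t, i)) ⬝ᵥ
          (R *ᵥ fun i => (fun q : UIdx m T => u' (q.1.castSucc, q.2)) (t, i))
        = (fun i => u' (t.castSucc, i)) ⬝ᵥ (R *ᵥ fun i => u' (t.castSucc, i)) := fun t => rfl
    simp only [this]
    have hlast := hR.posSemidef.dotProduct_mulVec_nonneg fun i => u' (Fin.last T, i)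
    have hst : star (fun i => u' (Fin.last T, i)) = fun i => u' (Fin.last T, i) :=
      funext fun p => star_trivial _
    rw [hst] at hlast
    linarith [hlast]

end Aux6

/-- Lemma 2, right inequality: `𝐂_T` is dominated by the leading principal block
submatrix of `𝐂_{T+1}`, i.e. `𝐂_T ⪯ 𝐂_{T+1}^{[0:T, 0:T]}`. -/
theorem stmt7 (n m T : ℕ) (hn : 0 < n) (hm : 0 < m) (hT : 1 ≤ T)
    (A : Matrix (Fin n) (Fin n) ℝ) (B : Matrix (Fin n) (Fin m) ℝ)
    (Q : Matrix (Fin n) (Fin n) ℝ) (R : Matrix (Fin m) (Fin m) ℝ)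
    (hQ : Q.PosSemidef) (hR : R.PosDef) :
    ((Cmat n m (T + 1) A B Q R).submatrix
        (fun p : SIdx n T => ((p.1.castSucc : Fin (T + 2)), p.2))
        (fun p : SIdx n T => ((p.1.castSucc : Fin (T + 2)), p.2)) -
      Cmat n m T A B Q R).PosSemidef := by
  rw [posSemidef_iff_dotProduct_mulVec]
  constructor
  · exact ((Cmat_herm n m (T+1) A B Q R hQ hR).submatrix _).sub (Cmat_herm n m T A B Q R hQ hR)
  · intro δ
    have hst : star δ = δ := funext fun p => star_trivial _
    rw [hst, Matrix.sub_mulVec, dotProduct_sub, sub_nonneg]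
    set ustar : UIdx m (T+1) → ℝ :=
      -((bigP n m (T+1) A B Q R)⁻¹ *ᵥ
        (((bigF n m (T+1) A B)ᵀ * bigQ n (T+1) Q * bigG n (T+1) A) *ᵥ extd n T δ)) with hus
    calc δ ⬝ᵥ (Cmat n m T A B Q R *ᵥ δ)
        ≤ costJ n m T A B Q R (fun q => ustar (q.1.castSucc, q.2)) δ :=
          cost_ge n m T A B Q R hQ hR _ δ
      _ ≤ costJ n m (T+1) A B Q R ustar (extd n T δ) :=
          costJ_mono n m T A B Q R hQ hR ustar δ
      _ = extd n T δ ⬝ᵥ (Cmat n m (T+1) A B Q R *ᵥ extd n T δ) :=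
          cost_opt n m (T+1) A B Q R hQ hR (extd n T δ)
      _ = δ ⬝ᵥ ((Cmat n m (T + 1) A B Q R).submatrix
            (fun p : SIdx n T => ((p.1.castSucc : Fin (T + 2)), p.2))
            (fun p : SIdx n T => ((p.1.castSucc : Fin (T + 2)), p.2)) *ᵥ δ) :=
          (submatrix_quad n T (Cmat n m (T+1) A B Q R) δ).symm

end
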